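/- arXiv:2107.03549 — 3 statements merged into one kernel-verified Lean document; each statement's English description precedes it below -/
import Mathlib

section
/- Let k ≥ 2 be an integer and let F : ℤ → ℤ be any k-step Fibonacci sequence. Then for every integer n, F(n) = ∑_{i=1}^{k} P(k,i) · F(n - k·i). -/
/-- The recursive triangle `P` from the paper: `P 0 0 = -1`, `P 0 (j+1) = 0`,
`P (i+1) 0 = -1`, and `P i j = 2 * P (i-1) j - P (i-1) (j-1)` for `i, j ≥ 1`. -/
def P : ℕ → ℕ → ℤ
  | 0, 0 => -1
  | 0, _ + 1 => 0
  | _ + 1, 0 => -1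
  | i + 1, j + 1 => 2 * P i (j + 1) - P i j


def acoef (m j : ℕ) : ℤ := (-1)^j * 2^(m-j) * (m.choose j)

lemma acoef_zero (m : ℕ) : acoef m 0 = 2^m := by simp [acoef]

lemma acoef_top (m j : ℕ) (h : m < j) : acoef m j = 0 := by
  simp [acoef, Nat.choose_eq_zero_of_lt h]

lemma acoef_succ (m j : ℕ) : acoef (m+1) (j+1) = 2 * acoef m (j+1) - acoef m j := by
  rcases lt_trichotomy j m with h | h | h
  · simp only [acoef, Nat.choose_succ_succ]
    have e1 : m + 1 - (j+1) = (m - (j+1)) + 1 := by omega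
    have e2 : m - j = (m - (j+1)) + 1 := by omega
    rw [e1, e2]
    push_cast
    ring
  · subst h
    rw [acoef_top j (j+1) (by omega)]
    simp only [acoef, Nat.choose_self, Nat.add_sub_cancel, Nat.sub_self]
    push_cast
    ring
  · rw [acoef_top m j h, acoef_top m (j+1) (by omega), acoef_top (m+1) (j+1) (by omega)]
    ring

lemma rowsum (K : ℕ) : ∑ j ∈ Finset.range (K+1), acoef K j = 1 := by
  have h := add_pow (-1 : ℤ) 2 K
  simp only [acoef]
  norm_num at h
  rw [← h]

lemma P_eq (K : ℕ) : ∀ j, P K j = (∑ s ∈ Finset.range j, acoef K s) - 1 := by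
  induction K with
  | zero =>
    intro j
    have ha : ∀ s, acoef 0 s = if s = 0 then 1 else 0 := by
      intro s; cases s <;> simp [acoef]
    rcases j with _ | i
    · simp [P]
    · have : ∑ s ∈ Finset.range (i+1), acoef 0 s = 1 := by
        simp [ha]
      rw [this]
      simp [P]
  | succ K ih =>
    intro j
    rcases j with _ | i
    · simp [P]
    · have hd : P (K+1) (i+1) = 2 * P K (i+1) - P K i := rfl
      rw [hd, ih (i+1), ih i]
      have hs : ∑ s ∈ Finset.range (i+1), acoef (K+1) s
          = 2 * (∑ s ∈ Finset.range (i+1), acoef K s) - ∑ s ∈ Finset.range i, acoef K s := by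
        rw [Finset.sum_range_succ' (acoef (K+1)) i, Finset.sum_range_succ' (acoef K) i]
        simp only [acoef_succ, acoef_zero]
        rw [Finset.sum_sub_distrib, mul_add, Finset.mul_sum]
        ring
      rw [hs]; ring

section
variable (k : ℕ) (hk : 2 ≤ k) (F : ℤ → ℤ)
  (hF : ∀ n : ℤ, F n = ∑ i ∈ Finset.Icc 1 k, F (n - (i : ℤ)))

include hk hF

lemma conv_range : ∀ y : ℤ, F y = ∑ i ∈ Finset.range k, F (y - 1 - i) := by
  intro y
  rw [hF y, ← Finset.Ico_add_one_right_eq_Icc, Finset.sum_Ico_eq_sum_range]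
  have : k + 1 - 1 = k := by omega
  rw [this]
  apply Finset.sum_congr rfl
  intro i _
  congr 1
  push_cast
  ring

lemma key : ∀ x : ℤ, F x = 2 * F (x-1) - F (x - 1 - k) := by
  intro x
  have h1 := conv_range k hk F hF x
  have h2 := conv_range k hk F hF (x-1)
  have h3 : ∑ i ∈ Finset.range k, (F (x - 1 - i) - F (x - 1 - (i+1:ℕ))) =
      F (x - 1 - (0:ℕ)) - F (x - 1 - (k:ℕ)) :=
    Finset.sum_range_sub' (fun i => F (x - 1 - i)) k
  rw [Finset.sum_sub_distrib] at h3
  have e : ∀ i : ℕ, F (x - 1 - ((i+1:ℕ):ℤ)) = F (x - 1 - 1 - i) := by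
    intro i; congr 1; push_cast; ring
  simp only [e] at h3
  rw [← h1, ← h2] at h3
  push_cast at h3 ⊢
  rw [sub_zero] at h3
  linarith

lemma lemA : ∀ (m : ℕ) (n : ℤ),
    F n = ∑ j ∈ Finset.range (m+1), acoef m j * F (n - (m:ℤ) - (k:ℤ) * j) := by
  intro m
  induction m with
  | zero => intro n; simp [acoef]
  | succ m ih =>
    intro n
    rw [ih n]
    have expand : ∀ j ∈ Finset.range (m+1),
        acoef m j * F (n - (m:ℤ) - (k:ℤ)*j)
        = 2 * acoef m j * F (n - ((m+1:ℕ):ℤ) - (k:ℤ)*j)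
          - acoef m j * F (n - ((m+1:ℕ):ℤ) - (k:ℤ)*((j+1:ℕ):ℤ)) := by
      intro j _
      rw [key k hk F hF (n - (m:ℤ) - (k:ℤ)*j)]
      have e2 : n - (m:ℤ) - (k:ℤ)*j - 1 - k = n - ((m+1:ℕ):ℤ) - (k:ℤ)*((j+1:ℕ):ℤ) := by
        push_cast; ring
      have e1 : n - (m:ℤ) - (k:ℤ)*j - 1 = n - ((m+1:ℕ):ℤ) - (k:ℤ)*j := by push_cast; ring
      rw [e2, e1]
      ring
    rw [Finset.sum_congr rfl expand, Finset.sum_sub_distrib]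
    have ext : ∑ j ∈ Finset.range (m+2), 2 * acoef m j * F (n - ((m+1:ℕ):ℤ) - (k:ℤ)*j)
        = ∑ j ∈ Finset.range (m+1), 2 * acoef m j * F (n - ((m+1:ℕ):ℤ) - (k:ℤ)*j) := by
      rw [Finset.sum_range_succ, acoef_top m (m+1) (by omega)]
      ring
    rw [← ext]
    rw [Finset.sum_range_succ'
      (fun j => 2 * acoef m j * F (n - ((m+1:ℕ):ℤ) - (k:ℤ)*j)) (m+1)]
    rw [Finset.sum_range_succ'
      (fun j => acoef (m+1) j * F (n - ((m+1:ℕ):ℤ) - (k:ℤ)*j)) (m+1)]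
    simp only [acoef_succ, acoef_zero, sub_mul, Nat.cast_zero, mul_zero, sub_zero,
      Nat.cast_add, Nat.cast_one]
    rw [Finset.sum_sub_distrib]
    ring
end

/-- Theorem 1.3: for `k ≥ 2` and any `k`-step Fibonacci sequence `F : ℤ → ℤ`
(i.e. `F n = ∑_{i=1}^k F (n - i)` for all integers `n`), we have
`F n = ∑_{i=1}^k P k i * F (n - k*i)` for every integer `n`. -/
theorem kstep_subsequence_identity (k : ℕ) (hk : 2 ≤ k) (F : ℤ → ℤ)
    (hF : ∀ n : ℤ, F n = ∑ i ∈ Finset.Icc 1 k, F (n - (i : ℤ))) :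
    ∀ n : ℤ, F n = ∑ i ∈ Finset.Icc 1 k, P k i * F (n - (k : ℤ) * (i : ℤ)) := by
  set G : ℤ → ℤ := fun n => ∑ j ∈ Finset.range (k+1), P k j * F (n - (k:ℤ) * j) with hG
  have hGdef : ∀ m : ℤ, G m = ∑ j ∈ Finset.range (k+1), P k j * F (m - (k:ℤ) * j) :=
    fun _ => rfl
  -- G is k-periodic
  have periodk : ∀ n : ℤ, G n = G (n - k) := by
    intro n
    have hGn : G n = (∑ j ∈ Finset.range k, P k (j+1) * F (n - (k:ℤ) - (k:ℤ)*j)) - F n := by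
      rw [hGdef n]
      rw [Finset.sum_range_succ' (fun j => P k j * F (n - (k:ℤ) * j)) k]
      have e : ∀ j : ℕ, F (n - (k:ℤ) * ((j+1:ℕ):ℤ)) = F (n - (k:ℤ) - (k:ℤ)*j) := by
        intro j; congr 1; push_cast; ring
      simp only [e, Nat.cast_zero, mul_zero, sub_zero]
      have : P k 0 = -1 := by rcases k with _ | k <;> rfl
      rw [this]
      try ring
    have hGm : G (n - k) = ∑ j ∈ Finset.range (k+1), P k j * F (n - (k:ℤ) - (k:ℤ)*j) := by
      rw [hGdef (n - (k:ℤ))]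
    have hA := lemA k hk F hF k n
    -- split hGm at top
    have hGm2 : G (n - k) = (∑ j ∈ Finset.range k, P k j * F (n - (k:ℤ) - (k:ℤ)*j))
        + P k k * F (n - (k:ℤ) - (k:ℤ)*k) := by
      rw [hGm, Finset.sum_range_succ]

    -- difference of shifted rows
    have diff : ∀ j : ℕ, P k (j+1) - P k j = acoef k j := by
      intro j
      rw [P_eq k (j+1), P_eq k j, Finset.sum_range_succ]
      ring
    have hPkk : P k k = - acoef k k := by
      rw [P_eq k k]
      have := rowsum k
      rw [Finset.sum_range_succ] at this
      linarith
    have split : (∑ j ∈ Finset.range k, P k (j+1) * F (n - (k:ℤ) - (k:ℤ)*j))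
        - (∑ j ∈ Finset.range k, P k j * F (n - (k:ℤ) - (k:ℤ)*j))
        = ∑ j ∈ Finset.range k, acoef k j * F (n - (k:ℤ) - (k:ℤ)*j) := by
      rw [← Finset.sum_sub_distrib]
      apply Finset.sum_congr rfl
      intro j _
      rw [← sub_mul, diff j]
    have hA2 : F n = (∑ j ∈ Finset.range k, acoef k j * F (n - (k:ℤ) - (k:ℤ)*j))
        + acoef k k * F (n - (k:ℤ) - (k:ℤ)*k) := by
      rw [hA, Finset.sum_range_succ]
    rw [hGn, hGm2, hPkk]
    linarith [split, hA2]
  -- G satisfies the window relation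
  have window : ∀ n : ℤ, G n = ∑ i ∈ Finset.Icc 1 k, G (n - i) := by
    intro n
    rw [hGdef n]
    simp only [hGdef]
    have e : ∀ j ∈ Finset.range (k+1), P k j * F (n - (k:ℤ)*j)
        = ∑ i ∈ Finset.Icc 1 k, P k j * F (n - i - (k:ℤ)*j) := by
      intro j _
      rw [hF (n - (k:ℤ)*j), Finset.mul_sum]
      apply Finset.sum_congr rfl
      intro i _
      congr 2
      ring
    rw [Finset.sum_congr rfl e, Finset.sum_comm]
  -- G is 1-periodic
  have per1 : ∀ n : ℤ, G (n + 1) = G n := by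
    intro n
    obtain ⟨K, rfl⟩ : ∃ K, k = K + 1 := ⟨k - 1, by omega⟩
    have convG : ∀ y : ℤ, G y = ∑ i ∈ Finset.range (K+1), G (y - 1 - i) := by
      intro y
      rw [window y, ← Finset.Ico_add_one_right_eq_Icc, Finset.sum_Ico_eq_sum_range]
      have : K + 1 + 1 - 1 = K + 1 := by omega
      rw [this]
      apply Finset.sum_congr rfl
      intro i _
      congr 1
      push_cast
      ring
    have h1 : G (n+1) = ∑ i ∈ Finset.range (K+1), G (n - i) := by
      rw [convG (n+1)]
      apply Finset.sum_congr rfl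
      intro i _
      congr 1
      ring
    have h2 : G n = (∑ i ∈ Finset.range K, G (n - 1 - i)) + G (n - 1 - K) := by
      rw [convG n, Finset.sum_range_succ]
    have h3 : G (n + 1) = G n + ∑ i ∈ Finset.range K, G (n - 1 - i) := by
      rw [h1, Finset.sum_range_succ' (fun i => G (n - (i:ℤ))) K]
      simp only [Nat.cast_zero, sub_zero]
      have e : ∀ i : ℕ, G (n - ((i+1:ℕ):ℤ)) = G (n - 1 - i) := by
        intro i; congr 1; push_cast; ring
      simp only [e]
      ring
    have h4 : G (n - 1 - K) = G n := by
      have := periodk n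
      rw [this]
      congr 1
      push_cast
      ring
    rw [h3]
    rw [h4] at h2
    linarith
  -- G is constant, hence zero
  have shift : ∀ (d : ℕ) (n : ℤ), G (n - d) = G n := by
    intro d
    induction d with
    | zero => intro n; simp
    | succ d ih =>
      intro n
      have : G (n - (d+1:ℕ)) = G (n - (d+1:ℕ) + 1) := (per1 (n - (d+1:ℕ))).symm
      rw [this]
      have e : n - ((d+1:ℕ):ℤ) + 1 = n - d := by push_cast; ring
      rw [e, ih n]
  have Gzero : ∀ n : ℤ, G n = 0 := by
    intro n
    have h1 : G n = (k:ℤ) * G n := by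
      have e1 : ∑ i ∈ Finset.Icc 1 k, G (n - i) = ∑ i ∈ Finset.Icc 1 k, G n :=
        Finset.sum_congr rfl (fun i _ => shift i n)
      have e2 : k + 1 - 1 = k := by omega
      calc G n = ∑ i ∈ Finset.Icc 1 k, G (n - i) := window n
        _ = ∑ i ∈ Finset.Icc 1 k, G n := e1
        _ = (k:ℤ) * G n := by
            rw [Finset.sum_const, Nat.card_Icc, e2, nsmul_eq_mul]
    have : ((k:ℤ) - 1) * G n = 0 := by linarith [h1]
    have hk1 : (k:ℤ) - 1 ≠ 0 := by
      have : (2:ℤ) ≤ k := by exact_mod_cast hk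
      omega
    exact (mul_eq_zero.mp this).resolve_left hk1
  -- conclude
  intro n
  have h0 := Gzero n
  rw [hGdef n] at h0
  rw [Finset.sum_range_succ' (fun j => P k j * F (n - (k:ℤ) * j)) k] at h0
  have hP0 : P k 0 = -1 := by rcases k with _ | k <;> rfl
  simp only [hP0, Nat.cast_zero, mul_zero, sub_zero] at h0
  have target : ∑ i ∈ Finset.Icc 1 k, P k i * F (n - (k:ℤ) * i)
      = ∑ j ∈ Finset.range k, P k (j+1) * F (n - (k:ℤ) * ((j+1:ℕ):ℤ)) := by
    rw [← Finset.Ico_add_one_right_eq_Icc, Finset.sum_Ico_eq_sum_range]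
    have : k + 1 - 1 = k := by omega
    rw [this]
    apply Finset.sum_congr rfl
    intro i _
    congr 2 <;> push_cast <;> ring
  rw [target]
  linarith
end

section
/- For every integer k ≥ 2, the polynomial r_k(X) divides the polynomial p_k(X^k) in ℤ[X]. -/
open Polynomial Finset

lemma P_zero_right (n : ℕ) : P n 0 = -1 := by cases n <;> rfl

lemma P_eq_zero : ∀ n j, n < j → P n j = 0
  | 0, j + 1, _ => rfl
  | n + 1, j + 1, h => by
    show 2 * P n (j + 1) - P n j = 0
    rw [P_eq_zero n (j + 1) (by omega), P_eq_zero n j (by omega)]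
    ring

lemma T_succ (n : ℕ) :
    ∑ j ∈ range (n + 1), C (P (n + 1) (j + 1)) * X ^ (n + 1 - 1 - j) =
      (2 * X - 1) * (∑ j ∈ range n, C (P n (j + 1)) * X ^ (n - 1 - j)) + X ^ n := by
  have h1 : ∀ j ∈ range (n + 1), C (P (n + 1) (j + 1)) * (X : ℤ[X]) ^ (n + 1 - 1 - j)
      = 2 * (C (P n (j + 1)) * X ^ (n - j)) - C (P n j) * X ^ (n - j) := by
    intro j _
    have h : P (n + 1) (j + 1) = 2 * P n (j + 1) - P n j := rfl
    rw [show n + 1 - 1 - j = n - j from by omega, h]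
    simp only [C_sub, C_mul, map_ofNat]
    ring
  rw [Finset.sum_congr rfl h1, Finset.sum_sub_distrib]
  have h2 : ∑ j ∈ range (n + 1), 2 * (C (P n (j + 1)) * (X : ℤ[X]) ^ (n - j))
      = 2 * X * ∑ j ∈ range n, C (P n (j + 1)) * X ^ (n - 1 - j) := by
    rw [Finset.sum_range_succ, P_eq_zero n (n + 1) (by omega)]
    simp only [C_0, zero_mul, mul_zero, add_zero, Finset.mul_sum]
    refine Finset.sum_congr rfl fun j hj => ?_
    rw [Finset.mem_range] at hj
    rw [show n - j = (n - 1 - j) + 1 from by omega]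
    ring
  have h3 : ∑ j ∈ range (n + 1), C (P n j) * (X : ℤ[X]) ^ (n - j)
      = (∑ j ∈ range n, C (P n (j + 1)) * X ^ (n - 1 - j)) - X ^ n := by
    rw [Finset.sum_range_succ']
    have e : ∀ j ∈ range n, C (P n (j + 1)) * (X : ℤ[X]) ^ (n - (j + 1))
        = C (P n (j + 1)) * X ^ (n - 1 - j) := fun j _ => by
      rw [show n - (j + 1) = n - 1 - j from by omega]
    rw [Finset.sum_congr rfl e]
    simp only [P_zero_right, Nat.sub_zero, map_neg, C_1, neg_mul, one_mul]
    ring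
  rw [h2, h3]
  ring

lemma key_s1 (n : ℕ) : (X - 1 : ℤ[X]) * (X ^ n - ∑ j ∈ range n, C (P n (j + 1)) * X ^ (n - 1 - j))
    = X ^ (n + 1) - (2 * X - 1) ^ n := by
  induction n with
  | zero => simp
  | succ n ih =>
    rw [T_succ n]
    linear_combination (2 * (X : ℤ[X]) - 1) * ih

lemma icc_to_range (n : ℕ) :
    ∑ i ∈ Icc 1 n, C (P n i) * (X : ℤ[X]) ^ (n - i)
      = ∑ j ∈ range n, C (P n (j + 1)) * X ^ (n - 1 - j) := by
  rw [← Finset.Ico_add_one_right_eq_Icc, Finset.sum_Ico_eq_sum_range]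
  refine Finset.sum_congr rfl fun j _ => ?_
  rw [Nat.add_comm 1 j, show n - (j + 1) = n - 1 - j from by omega]

lemma icc_geom (n : ℕ) :
    ∑ i ∈ Icc 1 n, (X : ℤ[X]) ^ (n - i) = ∑ j ∈ range n, X ^ j := by
  rw [← Finset.Ico_add_one_right_eq_Icc, Finset.sum_Ico_eq_sum_range]
  rw [← Finset.sum_range_reflect]
  refine Finset.sum_congr rfl fun j hj => ?_
  congr 1
  rw [Finset.mem_range] at hj
  omega

lemma coprime_aux (n : ℕ) : IsCoprime ((X : ℤ[X])) (∑ j ∈ range (n + 1), X ^ j) := by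
  rw [geom_sum_succ]
  have h := (isCoprime_one_right (x := (X : ℤ[X]))).add_mul_left_right
    (∑ j ∈ range n, (X : ℤ[X]) ^ j)
  rwa [add_comm] at h

open Polynomial in
/-- For every `k ≥ 2`, the polynomial `r_k(X) = X^k - ∑_{i=1}^k X^(k-i)` divides
`p_k(X^k)` in `ℤ[X]`, where `p_k(X) = X^k - ∑_{i=1}^k P k i • X^(k-i)`. -/
theorem rk_dvd_pk_comp (k : ℕ) (hk : 2 ≤ k) :
    ((X : ℤ[X]) ^ k - ∑ i ∈ Finset.Icc 1 k, X ^ (k - i)) ∣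
      ((X : ℤ[X]) ^ k - ∑ i ∈ Finset.Icc 1 k, C (P k i) * X ^ (k - i)).comp (X ^ k) := by
  rw [icc_geom]
  set Φ : ℤ[X] := ∑ j ∈ range k, X ^ j with hΦ
  set p : ℤ[X] := (X : ℤ[X]) ^ k - ∑ i ∈ Finset.Icc 1 k, C (P k i) * X ^ (k - i) with hp
  set r : ℤ[X] := X ^ k - Φ with hr
  have hkey : (X - 1 : ℤ[X]) * p = X ^ (k + 1) - (2 * X - 1) ^ k := by
    rw [hp, icc_to_range]; exact key_s1 k
  have hcomp : ((X : ℤ[X]) ^ k - 1) * p.comp (X ^ k)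
      = (X ^ (k + 1)) ^ k - (2 * X ^ k - 1) ^ k := by
    have h := congrArg (fun q : ℤ[X] => q.comp (X ^ k)) hkey
    simp only [mul_comp, sub_comp, pow_comp, X_comp, one_comp, ofNat_comp] at h
    push_cast at h
    linear_combination h
  have hgeom : (X - 1 : ℤ[X]) * Φ = X ^ k - 1 := by
    have h := geom_sum_mul (X : ℤ[X]) k
    linear_combination h
  have h3 : (X - 1 : ℤ[X]) * r = X ^ (k + 1) - (2 * X ^ k - 1) := by
    rw [hr]
    linear_combination -hgeom
  have h4 : (X - 1 : ℤ[X]) * r ∣ (X - 1) * (Φ * p.comp (X ^ k)) := by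
    have e : (X - 1 : ℤ[X]) * (Φ * p.comp (X ^ k)) = (X ^ (k + 1)) ^ k - (2 * X ^ k - 1) ^ k := by
      rw [← hcomp, ← hgeom]; ring
    rw [h3, e]
    exact sub_dvd_pow_sub_pow _ _ k
  have hX1 : (X - 1 : ℤ[X]) ≠ 0 := by
    intro h
    have := congrArg (eval 0) h
    simp at this
  have h5 : r ∣ Φ * p.comp (X ^ k) := (mul_dvd_mul_iff_left hX1).mp h4
  have hcX : IsCoprime (X : ℤ[X]) Φ := by
    rw [hΦ, show k = (k - 1) + 1 from by omega]
    exact coprime_aux _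
  have hcop : IsCoprime r Φ := by
    have h := (hcX.pow_left : IsCoprime ((X:ℤ[X]) ^ k) Φ).add_mul_left_left (-1)
    rwa [mul_neg_one, ← sub_eq_add_neg, ← hr] at h
  exact hcop.dvd_of_dvd_mul_left h5
end

section
/- For all natural numbers k, j, m with k ≥ 2, 0 ≤ j ≤ k-2, and 1 ≤ m ≤ j, the identity -P(k-1,k-1-j) - Q(k-m,k-j) + ∑_{r=k-m}^{k-1} Q(r,k-j-1) + ∑_{r=k-j}^{k-1-m} Q(r,k-j) = 0 holds, where the last sum is interpreted as 0 when k-1-m < k-j. -/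
/-- The triangle `Q`, the backward difference of `P` in the row index. -/
def Q : ℕ → ℕ → ℤ
  | 0, _ => 0
  | i + 1, j => P (i + 1) j - P i j

lemma P_eq_zero_of_lt : ∀ i j : ℕ, i < j → P i j = 0 := by
  intro i
  induction i with
  | zero => intro j h; cases j with
    | zero => omega
    | succ n => simp [P]
  | succ n ih =>
    intro j h
    cases j with
    | zero => omega
    | succ m =>
      rw [P, ih (m+1) (by omega), ih m (by omega)]
      ring

lemma tel (a c : ℕ) : ∀ n : ℕ,
    (∑ r ∈ Finset.Icc (a + 1) (a + n), Q r c) = P (a + n) c - P a c := by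
  intro n
  induction n with
  | zero => simp
  | succ n ih =>
    rw [show a + (n + 1) = (a + n) + 1 by ring,
      Finset.sum_Icc_succ_top (by omega) (fun r => Q r c), ih]
    show _ + Q ((a + n) + 1) c = _
    rw [Q]
    ring

/-- Case E computation: for `k ≥ 2`, `0 ≤ j ≤ k-2`, `1 ≤ m ≤ j`,
`-P (k-1) (k-1-j) - Q (k-m) (k-j) + ∑_{r=k-m}^{k-1} Q r (k-j-1)
  + ∑_{r=k-j}^{k-1-m} Q r (k-j) = 0`
(the last sum being empty, hence `0`, when `k-1-m < k-j`). -/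
theorem caseE_sum (k j m : ℕ) (hk : 2 ≤ k) (hj : j ≤ k - 2) (hm : 1 ≤ m) (hmj : m ≤ j) :
    -P (k - 1) (k - 1 - j) - Q (k - m) (k - j) +
      (∑ r ∈ Finset.Icc (k - m) (k - 1), Q r (k - j - 1)) +
      (∑ r ∈ Finset.Icc (k - j) (k - 1 - m), Q r (k - j)) = 0 := by
  set a := k - m - 1 with ha
  set b := k - j - 1 with hb
  have h1 : k - m = a + 1 := by omega
  have h2 : k - 1 = a + m := by omega
  have h3 : k - 1 - j = b := by omega
  have h4 : k - j - 1 = b := by omega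
  have h5 : k - j = b + 1 := by omega
  have h6 : k - 1 - m = a := by omega
  have h7 : a = b + (j - m) := by omega
  rw [h3, h5, h6, h1, h2, tel a b m]
  rw [show Finset.Icc (b + 1) a = Finset.Icc (b + 1) (b + (j - m)) from by rw [h7],
    tel b (b + 1) (j - m), ← h7]
  rw [show Q (a + 1) (b + 1) = P (a + 1) (b + 1) - P a (b + 1) from rfl]
  rw [show P (a + 1) (b + 1) = 2 * P a (b + 1) - P a b from rfl]
  rw [P_eq_zero_of_lt b (b + 1) (by omega)]
  ring
end
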